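/- With the matrices defined in the context, the operator L_h := Σ_{α=1}^{3} (ρ^(−1/2) C^(α) S_comp^(−1/2)) ⊗ D^(α) satisfies ‖L_h‖ ≤ (3/h) · ρ^(−1/2) · ‖S_comp^(−1/2)‖. -/

import Mathlib

open Matrix
open scoped Matrix.Norms.L2Operator ComplexOrder Kronecker

noncomputable section

/-- The state-register index set, of cardinality `3 + 6 + 7 = 16`, corresponding to the
block partition of rows and columns into sizes `3 + 6 + 7`. -/
abbrev StateIdx : Type := Fin 3 ⊕ (Fin 6 ⊕ Fin 7)

/-- The three `3 × 6` matrices `C^(1), C^(2), C^(3)` (here indexed by `Fin 3`). -/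
def Cmat : Fin 3 → Matrix (Fin 3) (Fin 6) ℂ
  | 0 => !![1, 0, 0, 0, 0, 0; 0, 0, 0, 1, 0, 0; 0, 0, 0, 0, 1, 0]
  | 1 => !![0, 0, 0, 1, 0, 0; 0, 1, 0, 0, 0, 0; 0, 0, 0, 0, 0, 1]
  | 2 => !![0, 0, 0, 0, 1, 0; 0, 0, 0, 0, 0, 1; 0, 0, 1, 0, 0, 0]

/-- `A^(α)`: the `16 × 16` matrix with `C^(α)` as its `(1,2)` block, `(C^(α))ᵀ` as its `(2,1)`
block, and zero blocks elsewhere, in the block partition `3 + (6 + 7)`. -/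
def Amat (α : Fin 3) : Matrix StateIdx StateIdx ℂ :=
  Matrix.fromBlocks 0 (Matrix.fromCols (Cmat α) 0) (Matrix.fromRows (Cmat α)ᵀ 0) 0

/-- `B_cell = diag(ρ I₃, S_comp, I₇)`. -/
def Bcell (ρ : ℝ) (S : Matrix (Fin 6) (Fin 6) ℂ) : Matrix StateIdx StateIdx ℂ :=
  Matrix.fromBlocks ((ρ : ℂ) • 1) 0 0 (Matrix.fromBlocks S 0 0 1)

/-- The positive semidefinite square root of a positive semidefinite matrix (the definition
`Matrix.PosSemidef.sqrt` of the older Mathlib, removed since). -/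
def Matrix.PosSemidef.sqrt {n 𝕜 : Type*} [Fintype n] [DecidableEq n] [RCLike 𝕜]
    {A : Matrix n n 𝕜} (hA : A.PosSemidef) : Matrix n n 𝕜 :=
  hA.isHermitian.eigenvectorUnitary.1 *
    diagonal ((↑) ∘ Real.sqrt ∘ hA.isHermitian.eigenvalues) *
    (star hA.isHermitian.eigenvectorUnitary : Matrix n n 𝕜)

/-- `M^(−1/2)`: the inverse of the unique positive definite square root of a positive
definite matrix `M`. -/
def invSqrt {ι : Type*} [Fintype ι] [DecidableEq ι] {M : Matrix ι ι ℂ}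
    (hM : M.PosDef) : Matrix ι ι ℂ :=
  hM.posSemidef.sqrt⁻¹

/-- The spatial index set for `N` qubits, of cardinality `2^N`. -/
abbrev QubitIdx (N : ℕ) : Type := Fin N → Fin 2

def sigma01 : Matrix (Fin 2) (Fin 2) ℂ := !![0, 1; 0, 0]

def sigma10 : Matrix (Fin 2) (Fin 2) ℂ := !![0, 0; 1, 0]

/-- The Kronecker (tensor) product `f 0 ⊗ f 1 ⊗ ⋯ ⊗ f (N−1)` of a family of `2 × 2`
matrices, realized on the index set `Fin N → Fin 2` (position `0` is the leftmost factor). -/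
def tensorFamily {N : ℕ} (f : Fin N → Matrix (Fin 2) (Fin 2) ℂ) :
    Matrix (QubitIdx N) (QubitIdx N) ℂ :=
  Matrix.of fun x y => ∏ i, f i (x i) (y i)

/-- The factor at position `p ∈ {0, …, n−1}` of the pure tensor
`I₂^⊗(n−k) ⊗ a ⊗ b^⊗(k−1)` (for `1 ≤ k ≤ n`). -/
def cellFactor (n k : ℕ) (a b : Matrix (Fin 2) (Fin 2) ℂ) (p : ℕ) :
    Matrix (Fin 2) (Fin 2) ℂ :=
  if p < n - k then 1 else if p = n - k then a else b

/-- `S_k^(α) = I₂^⊗(n(α−1)) ⊗ S_k^cell ⊗ I₂^⊗(n(3−α))` with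
`S_k^cell = I₂^⊗(n−k) ⊗ σ01 ⊗ σ10^⊗(k−1) − I₂^⊗(n−k) ⊗ σ10 ⊗ σ01^⊗(k−1)`,
realized on `3n` qubits.  Here `α : Fin 3` is `0`-based and `1 ≤ k ≤ n`. -/
def Smat (n : ℕ) (α : Fin 3) (k : ℕ) :
    Matrix (QubitIdx (3 * n)) (QubitIdx (3 * n)) ℂ :=
  tensorFamily (fun i =>
      if i.val / n = α.val then cellFactor n k sigma01 sigma10 (i.val % n) else 1) -
    tensorFamily (fun i =>
      if i.val / n = α.val then cellFactor n k sigma10 sigma01 (i.val % n) else 1)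

/-- `D^(α) = (1/(2h)) ∑_{k=1}^n S_k^(α)`. -/
def Dmat (n : ℕ) (h : ℝ) (α : Fin 3) : Matrix (QubitIdx (3 * n)) (QubitIdx (3 * n)) ℂ :=
  (1 / (2 * (h : ℂ))) • ∑ k : Fin n, Smat n α (k.val + 1)

/-- The rank-one projector `P_j = |φ_j⟩⟨φ_j|`. -/
def Pmat (φ : Fin 16 → StateIdx → ℂ) (j : Fin 16) : Matrix StateIdx StateIdx ℂ :=
  Matrix.vecMulVec (φ j) (star (φ j))

/-- `H_jk^(α) := P_j^(α) ⊗ (i λ_j^(α)/(2h)) S_k^(α)`. -/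
def Hterm (n : ℕ) (h : ℝ) (lam : Fin 3 → Fin 16 → ℝ) (φ : Fin 3 → Fin 16 → StateIdx → ℂ)
    (α : Fin 3) (j : Fin 16) (k : Fin n) :
    Matrix (StateIdx × QubitIdx (3 * n)) (StateIdx × QubitIdx (3 * n)) ℂ :=
  Pmat (φ α) j ⊗ₖ ((Complex.I * (lam α j : ℂ) / (2 * (h : ℂ))) • Smat n α (k.val + 1))

/-- The elastic-wave Hamiltonian `H = ∑_{α,j,k} H_jk^(α)`. -/
def Hfull (n : ℕ) (h : ℝ) (lam : Fin 3 → Fin 16 → ℝ) (φ : Fin 3 → Fin 16 → StateIdx → ℂ) :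
    Matrix (StateIdx × QubitIdx (3 * n)) (StateIdx × QubitIdx (3 * n)) ℂ :=
  ∑ α : Fin 3, ∑ j : Fin 16, ∑ k : Fin n, Hterm n h lam φ α j k

/-- Ordered product `f (m−1) * f (m−2) * ⋯ * f 0` (largest index leftmost). -/
def prodDesc {M : Type*} [Monoid M] {m : ℕ} (f : Fin m → M) : M :=
  ((List.finRange m).reverse.map f).prod

/-- Ordered product `f 0 * f 1 * ⋯ * f (m−1)` (smallest index leftmost). -/
def prodAsc {M : Type*} [Monoid M] {m : ℕ} (f : Fin m → M) : M :=
  ((List.finRange m).map f).prod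

/-- The first-order Trotter operator `U₁(τ)`: the ordered product of the factors
`exp(−i H_jk^(α) τ)` over all triples `(α, j, k)`, in decreasing lexicographic order
(the factor with the largest `(α, j, k)` leftmost, the factor with the smallest rightmost). -/
def U1 (n : ℕ) (h : ℝ) (lam : Fin 3 → Fin 16 → ℝ) (φ : Fin 3 → Fin 16 → StateIdx → ℂ)
    (τ : ℝ) : Matrix (StateIdx × QubitIdx (3 * n)) (StateIdx × QubitIdx (3 * n)) ℂ :=
  prodDesc fun α : Fin 3 => prodDesc fun j : Fin 16 => prodDesc fun k : Fin n =>
    NormedSpace.exp ((-(Complex.I * (τ : ℂ))) • Hterm n h lam φ α j k)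

/-- The reversed-order product of the factors `exp(−i H_jk^(α) τ)`: increasing
lexicographic order in `(α, j, k)`. -/
def U1rev (n : ℕ) (h : ℝ) (lam : Fin 3 → Fin 16 → ℝ) (φ : Fin 3 → Fin 16 → StateIdx → ℂ)
    (τ : ℝ) : Matrix (StateIdx × QubitIdx (3 * n)) (StateIdx × QubitIdx (3 * n)) ℂ :=
  prodAsc fun α : Fin 3 => prodAsc fun j : Fin 16 => prodAsc fun k : Fin n =>
    NormedSpace.exp ((-(Complex.I * (τ : ℂ))) • Hterm n h lam φ α j k)

/-- The second-order (symmetric) Trotter operator `U₂(τ) = U₁(τ/2) · Ũ₁(τ/2)`. -/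
def U2 (n : ℕ) (h : ℝ) (lam : Fin 3 → Fin 16 → ℝ) (φ : Fin 3 → Fin 16 → StateIdx → ℂ)
    (τ : ℝ) : Matrix (StateIdx × QubitIdx (3 * n)) (StateIdx × QubitIdx (3 * n)) ℂ :=
  U1 n h lam φ (τ / 2) * U1rev n h lam φ (τ / 2)

end


section Aux

open Finset

-- ### Generic `l2` operator norm helpers

lemma l2_opNorm_le_of_mulVec {m n : Type*} [Fintype m] [Fintype n] [DecidableEq n]
    (A : Matrix m n ℂ) (c : ℝ) (hc : 0 ≤ c)
    (h : ∀ v : EuclideanSpace ℂ n, ‖(EuclideanSpace.equiv m ℂ).symm (A *ᵥ v)‖ ≤ c * ‖v‖) :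
    ‖A‖ ≤ c := by
  rw [Matrix.l2_opNorm_def]
  refine ContinuousLinearMap.opNorm_le_bound _ hc fun v => ?_
  simpa [Matrix.toEuclideanLin_apply] using h v

lemma euc_norm_sq {ι : Type*} [Fintype ι] (v : EuclideanSpace ℂ ι) :
    ‖v‖ ^ 2 = ∑ i, ‖v i‖ ^ 2 := by
  rw [EuclideanSpace.norm_eq, Real.sq_sqrt]
  positivity

lemma euc_norm_le_of_sq {ι : Type*} [Fintype ι] (v : EuclideanSpace ℂ ι) (c : ℝ) (hc : 0 ≤ c)
    (h : ∑ i, ‖v i‖ ^ 2 ≤ c ^ 2) : ‖v‖ ≤ c := by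
  have h2 : ‖v‖ ^ 2 ≤ c ^ 2 := by rw [euc_norm_sq]; exact h
  nlinarith [norm_nonneg v]

-- ### Kronecker product norm bound

lemma kron_one_norm {m n p : Type*} [Fintype m] [Fintype n] [Fintype p]
    [DecidableEq n] [DecidableEq p] (A : Matrix m n ℂ) :
    ‖A ⊗ₖ (1 : Matrix p p ℂ)‖ ≤ ‖A‖ := by
  refine l2_opNorm_le_of_mulVec _ _ (norm_nonneg A) fun v => ?_
  set vk : p → EuclideanSpace ℂ n := fun k => (EuclideanSpace.equiv n ℂ).symm (fun j => v (j, k))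
    with hvk
  refine euc_norm_le_of_sq _ _ (by positivity) ?_
  have hmv : ∀ i k, ((A ⊗ₖ (1 : Matrix p p ℂ)) *ᵥ v) (i, k) = (A *ᵥ (vk k)) i := by
    intro i k
    simp only [Matrix.mulVec, dotProduct, Fintype.sum_prod_type, Matrix.kroneckerMap_apply,
      Matrix.one_apply]
    rw [Finset.sum_comm]
    simp [Finset.sum_ite_eq', mul_comm, mul_assoc, hvk]
  calc ∑ ik : m × p, ‖((EuclideanSpace.equiv (m × p) ℂ).symm ((A ⊗ₖ (1 : Matrix p p ℂ)) *ᵥ v)) ik‖ ^ 2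
      = ∑ k : p, ∑ i : m, ‖(A *ᵥ (vk k)) i‖ ^ 2 := by
        rw [Fintype.sum_prod_type, Finset.sum_comm]
        simp [hmv]
    _ ≤ ∑ k : p, (‖A‖ * ‖vk k‖) ^ 2 := by
        refine Finset.sum_le_sum fun k _ => ?_
        have h1 := Matrix.l2_opNorm_mulVec A (vk k)
        have h2 : ∑ i : m, ‖(A *ᵥ (vk k)) i‖ ^ 2
            = ‖(EuclideanSpace.equiv m ℂ).symm (A *ᵥ (vk k))‖ ^ 2 := by
          rw [euc_norm_sq]; rfl
        rw [h2]
        have := norm_nonneg ((EuclideanSpace.equiv m ℂ).symm (A *ᵥ (vk k)))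
        nlinarith [norm_nonneg A, norm_nonneg (vk k)]
    _ = (‖A‖ * ‖v‖) ^ 2 := by
        have : ∀ k, ‖vk k‖ ^ 2 = ∑ j : n, ‖v (j, k)‖ ^ 2 := fun k => by
          rw [euc_norm_sq]; rfl
        have hv : ‖v‖ ^ 2 = ∑ jk : n × p, ‖v jk‖ ^ 2 := euc_norm_sq v
        simp only [mul_pow]
        rw [hv, Fintype.sum_prod_type, Finset.sum_comm, ← Finset.mul_sum]
        congr 1
        refine Finset.sum_congr rfl fun k _ => ?_
        rw [this k]

lemma one_kron_norm {m n p : Type*} [Fintype m] [Fintype n] [Fintype p]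
    [DecidableEq n] [DecidableEq p] (B : Matrix m n ℂ) :
    ‖(1 : Matrix p p ℂ) ⊗ₖ B‖ ≤ ‖B‖ := by
  refine l2_opNorm_le_of_mulVec _ _ (norm_nonneg B) fun v => ?_
  set vk : p → EuclideanSpace ℂ n := fun k => (EuclideanSpace.equiv n ℂ).symm (fun j => v (k, j))
    with hvk
  refine euc_norm_le_of_sq _ _ (by positivity) ?_
  have hmv : ∀ k i, (((1 : Matrix p p ℂ) ⊗ₖ B) *ᵥ v) (k, i) = (B *ᵥ (vk k)) i := by
    intro k i
    simp only [Matrix.mulVec, dotProduct, Fintype.sum_prod_type, Matrix.kroneckerMap_apply,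
      Matrix.one_apply]
    simp [Finset.sum_ite_eq', mul_comm, mul_assoc, hvk]
  calc ∑ ik : p × m, ‖((EuclideanSpace.equiv (p × m) ℂ).symm (((1 : Matrix p p ℂ) ⊗ₖ B) *ᵥ v)) ik‖ ^ 2
      = ∑ k : p, ∑ i : m, ‖(B *ᵥ (vk k)) i‖ ^ 2 := by
        rw [Fintype.sum_prod_type]
        simp [hmv]
    _ ≤ ∑ k : p, (‖B‖ * ‖vk k‖) ^ 2 := by
        refine Finset.sum_le_sum fun k _ => ?_
        have h1 := Matrix.l2_opNorm_mulVec B (vk k)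
        have h2 : ∑ i : m, ‖(B *ᵥ (vk k)) i‖ ^ 2
            = ‖(EuclideanSpace.equiv m ℂ).symm (B *ᵥ (vk k))‖ ^ 2 := by
          rw [euc_norm_sq]; rfl
        rw [h2]
        have := norm_nonneg ((EuclideanSpace.equiv m ℂ).symm (B *ᵥ (vk k)))
        nlinarith [norm_nonneg B, norm_nonneg (vk k)]
    _ = (‖B‖ * ‖v‖) ^ 2 := by
        have : ∀ k, ‖vk k‖ ^ 2 = ∑ j : n, ‖v (k, j)‖ ^ 2 := fun k => by
          rw [euc_norm_sq]; rfl
        have hv : ‖v‖ ^ 2 = ∑ jk : p × n, ‖v jk‖ ^ 2 := euc_norm_sq v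
        simp only [mul_pow]
        rw [hv, Fintype.sum_prod_type, ← Finset.mul_sum]
        congr 1
        refine Finset.sum_congr rfl fun k _ => ?_
        rw [this k]

lemma kron_norm_le {m n p q : Type*} [Fintype m] [Fintype n] [Fintype p] [Fintype q]
    [DecidableEq n] [DecidableEq p] [DecidableEq q]
    (A : Matrix m n ℂ) (B : Matrix p q ℂ) : ‖A ⊗ₖ B‖ ≤ ‖A‖ * ‖B‖ := by
  have hfac : A ⊗ₖ B = (A ⊗ₖ (1 : Matrix p p ℂ)) * ((1 : Matrix n n ℂ) ⊗ₖ B) := by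
    rw [← Matrix.mul_kronecker_mul, Matrix.mul_one, Matrix.one_mul]
  rw [hfac]
  calc ‖(A ⊗ₖ (1 : Matrix p p ℂ)) * ((1 : Matrix n n ℂ) ⊗ₖ B)‖
      ≤ ‖A ⊗ₖ (1 : Matrix p p ℂ)‖ * ‖(1 : Matrix n n ℂ) ⊗ₖ B‖ := Matrix.l2_opNorm_mul _ _
    _ ≤ ‖A‖ * ‖B‖ := by
        have h1 := kron_one_norm (p := p) A
        have h2 := one_kron_norm (p := n) B
        have := norm_nonneg (A ⊗ₖ (1 : Matrix p p ℂ))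
        have := norm_nonneg ((1 : Matrix n n ℂ) ⊗ₖ B)
        nlinarith [norm_nonneg A, norm_nonneg B]

-- ### Norm of the `C` matrices

lemma Cmat_mul_conjT (α : Fin 3) : Cmat α * (Cmat α)ᴴ = 1 := by
  fin_cases α <;>
    · ext i j
      fin_cases i <;> fin_cases j <;>
        simp [Cmat, Matrix.mul_apply, Fin.sum_univ_six, Matrix.one_apply, Matrix.cons_val_succ,
          Matrix.cons_val_zero, Fin.isValue, show (5 : Fin 6) = Fin.succ 4 from rfl]

lemma norm_one_matrix {ι : Type*} [Fintype ι] [DecidableEq ι] [Nonempty ι] :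
    ‖(1 : Matrix ι ι ℂ)‖ = 1 := by
  have h := Matrix.l2_opNorm_conjTranspose_mul_self (1 : Matrix ι ι ℂ)
  simp only [Matrix.conjTranspose_one, Matrix.mul_one] at h
  have hne : (1 : Matrix ι ι ℂ) ≠ 0 := by
    intro hcontra
    have := congrFun (congrFun hcontra (Classical.arbitrary ι)) (Classical.arbitrary ι)
    simp [Matrix.one_apply] at this
  have hpos : 0 < ‖(1 : Matrix ι ι ℂ)‖ := norm_pos_iff.mpr hne
  nlinarith

lemma Cmat_norm (α : Fin 3) : ‖Cmat α‖ = 1 := by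
  have h := Matrix.l2_opNorm_conjTranspose_mul_self ((Cmat α)ᴴ)
  rw [Matrix.conjTranspose_conjTranspose, Cmat_mul_conjT, Matrix.l2_opNorm_conjTranspose,
    norm_one_matrix] at h
  nlinarith [norm_nonneg (Cmat α)]

-- ### Combinatorics of the shift matrices

lemma sigma01_apply (a b : Fin 2) : sigma01 a b = if a = 0 ∧ b = 1 then 1 else 0 := by
  fin_cases a <;> fin_cases b <;> simp [sigma01]

lemma sigma10_apply (a b : Fin 2) : sigma10 a b = if a = 1 ∧ b = 0 then 1 else 0 := by
  fin_cases a <;> fin_cases b <;> simp [sigma10]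

lemma sigma01_conjT : sigma01ᴴ = sigma10 := by
  ext a b
  fin_cases a <;> fin_cases b <;> simp [sigma01, sigma10]

/-- The indicator condition for one factor of the `σ01`-tensor term. -/
def blockCond (n : ℕ) (α : Fin 3) (k : ℕ) (x y : QubitIdx (3 * n)) (i : Fin (3 * n)) : Prop :=
  if i.val / n = α.val then
    (if i.val % n < n - k then x i = y i
     else if i.val % n = n - k then x i = 0 ∧ y i = 1
     else x i = 1 ∧ y i = 0)
  else x i = y i

instance (n : ℕ) (α : Fin 3) (k : ℕ) (x y : QubitIdx (3 * n)) (i : Fin (3 * n)) :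
    Decidable (blockCond n α k x y i) := by
  unfold blockCond; infer_instance

lemma tensor01_apply (n : ℕ) (α : Fin 3) (k : ℕ) (x y : QubitIdx (3 * n)) :
    tensorFamily (fun i =>
      if i.val / n = α.val then cellFactor n k sigma01 sigma10 (i.val % n) else 1) x y =
      if (∀ i, blockCond n α k x y i) then 1 else 0 := by
  have : ∀ i : Fin (3 * n),
      (if i.val / n = α.val then cellFactor n k sigma01 sigma10 (i.val % n) else 1) (x i) (y i) =
      if blockCond n α k x y i then 1 else 0 := by
    intro i
    unfold blockCond cellFactor
    split_ifs with h1 h2 h3 <;>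
      simp_all [Matrix.one_apply, sigma01_apply, sigma10_apply]
  simp only [tensorFamily, Matrix.of_apply, this, Finset.prod_boole]
  simp

def ysucc (n : ℕ) (α : Fin 3) (k : ℕ) (x : QubitIdx (3 * n)) : QubitIdx (3 * n) :=
  fun i => if i.val / n = α.val then
    (if i.val % n < n - k then x i else if i.val % n = n - k then 1 else 0)
  else x i

def domP (n : ℕ) (α : Fin 3) (k : ℕ) (x : QubitIdx (3 * n)) : Prop :=
  ∀ i : Fin (3 * n), i.val / n = α.val →
    (i.val % n = n - k → x i = 0) ∧ (n - k < i.val % n → x i = 1)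

instance (n : ℕ) (α : Fin 3) (k : ℕ) (x : QubitIdx (3 * n)) : Decidable (domP n α k x) := by
  unfold domP; infer_instance

lemma blockCond_iff (n : ℕ) (α : Fin 3) (k : ℕ) (x y : QubitIdx (3 * n)) :
    (∀ i, blockCond n α k x y i) ↔ domP n α k x ∧ y = ysucc n α k x := by
  constructor
  · intro h
    constructor
    · intro i hi
      have hb := h i
      unfold blockCond at hb
      rw [if_pos hi] at hb
      constructor
      · intro hp
        rw [if_neg (by omega), if_pos hp] at hb
        exact hb.1
      · intro hp
        rw [if_neg (by omega), if_neg (by omega)] at hb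
        exact hb.1
    · funext i
      have hb := h i
      unfold blockCond at hb
      unfold ysucc
      by_cases hi : i.val / n = α.val
      · rw [if_pos hi] at hb ⊢
        by_cases h1 : i.val % n < n - k
        · rw [if_pos h1] at hb ⊢; exact hb.symm
        · rw [if_neg h1] at hb ⊢
          by_cases h2 : i.val % n = n - k
          · rw [if_pos h2] at hb ⊢; exact hb.2
          · rw [if_neg h2] at hb ⊢; exact hb.2
      · rw [if_neg hi] at hb ⊢; exact hb.symm
  · rintro ⟨hd, rfl⟩
    intro i
    unfold blockCond ysucc
    by_cases hi : i.val / n = α.val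
    · rw [if_pos hi, if_pos hi]
      by_cases h1 : i.val % n < n - k
      · rw [if_pos h1, if_pos h1]
      · rw [if_neg h1, if_neg h1]
        by_cases h2 : i.val % n = n - k
        · rw [if_pos h2, if_pos h2]
          exact ⟨(hd i hi).1 h2, rfl⟩
        · rw [if_neg h2, if_neg h2]
          exact ⟨(hd i hi).2 (by omega), rfl⟩
    · rw [if_neg hi, if_neg hi]

lemma exists_block_index (n : ℕ) (hn : 1 ≤ n) (α : Fin 3) (p : ℕ) (hp : p < n) :
    ∃ i : Fin (3 * n), i.val / n = α.val ∧ i.val % n = p := by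
  have hα : α.val < 3 := α.isLt
  have hle : α.val * n ≤ 2 * n := Nat.mul_le_mul_right n (by omega)
  refine ⟨⟨p + α.val * n, by omega⟩, ?_, ?_⟩
  · show (p + α.val * n) / n = α.val
    rw [Nat.add_mul_div_right _ _ (by omega : 0 < n), Nat.div_eq_of_lt hp]; omega
  · show (p + α.val * n) % n = p
    rw [Nat.add_mul_mod_self_right, Nat.mod_eq_of_lt hp]

lemma domP_lt_false (n : ℕ) (hn : 1 ≤ n) (α : Fin 3) (k k' : Fin n) (x : QubitIdx (3 * n))
    (hkk : k.val < k'.val) (h : domP n α (k.val + 1) x) (h' : domP n α (k'.val + 1) x) :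
    False := by
  have hk := k.isLt
  have hk' := k'.isLt
  obtain ⟨i, hi1, hi2⟩ := exists_block_index n hn α (n - (k.val + 1)) (by omega)
  have h0 : x i = 0 := (h i hi1).1 (by omega)
  have h1 : x i = 1 := (h' i hi1).2 (by omega)
  rw [h0] at h1
  exact absurd h1 (by decide)

lemma domP_unique (n : ℕ) (hn : 1 ≤ n) (α : Fin 3) (k k' : Fin n) (x : QubitIdx (3 * n))
    (h : domP n α (k.val + 1) x) (h' : domP n α (k'.val + 1) x) : k = k' := by
  rcases lt_trichotomy k.val k'.val with hlt | heq | hgt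
  · exact absurd (domP_lt_false n hn α k k' x hlt h h') (fun a => a)
  · exact Fin.ext heq
  · exact absurd (domP_lt_false n hn α k' k x hgt h' h) (fun a => a)

lemma ysucc_k_eq (n : ℕ) (hn : 1 ≤ n) (α : Fin 3) (k k' : Fin n) (x x' : QubitIdx (3 * n))
    (hd : domP n α (k.val + 1) x) (hd' : domP n α (k'.val + 1) x')
    (hy : ysucc n α (k.val + 1) x = ysucc n α (k'.val + 1) x') : k = k' := by
  have hk := k.isLt
  have hk' := k'.isLt
  rcases lt_trichotomy k.val k'.val with hlt | heq | hgt
  · exfalso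
    obtain ⟨i, hi1, hi2⟩ := exists_block_index n hn α (n - (k.val + 1)) (by omega)
    have e1 : ysucc n α (k.val + 1) x i = 1 := by
      unfold ysucc; rw [if_pos hi1, if_neg (by omega), if_pos (by omega)]
    have e2 : ysucc n α (k'.val + 1) x' i = 0 := by
      unfold ysucc; rw [if_pos hi1, if_neg (by omega), if_neg (by omega)]
    rw [hy, e2] at e1
    exact absurd e1 (by decide)
  · exact Fin.ext heq
  · exfalso
    obtain ⟨i, hi1, hi2⟩ := exists_block_index n hn α (n - (k'.val + 1)) (by omega)
    have e1 : ysucc n α (k'.val + 1) x' i = 1 := by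
      unfold ysucc; rw [if_pos hi1, if_neg (by omega), if_pos (by omega)]
    have e2 : ysucc n α (k.val + 1) x i = 0 := by
      unfold ysucc; rw [if_pos hi1, if_neg (by omega), if_neg (by omega)]
    rw [← hy, e2] at e1
    exact absurd e1 (by decide)

lemma ysucc_inj (n : ℕ) (hn : 1 ≤ n) (α : Fin 3) (k k' : Fin n) (x x' : QubitIdx (3 * n))
    (hd : domP n α (k.val + 1) x) (hd' : domP n α (k'.val + 1) x')
    (hy : ysucc n α (k.val + 1) x = ysucc n α (k'.val + 1) x') : x = x' ∧ k = k' := by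
  have hkk : k = k' := ysucc_k_eq n hn α k k' x x' hd hd' hy
  subst hkk
  refine ⟨funext fun i => ?_, rfl⟩
  have hyi := congrFun hy i
  unfold ysucc at hyi
  by_cases hi : i.val / n = α.val
  · rw [if_pos hi, if_pos hi] at hyi
    by_cases h1 : i.val % n < n - (k.val + 1)
    · rw [if_pos h1, if_pos h1] at hyi; exact hyi
    · rw [if_neg h1, if_neg h1] at hyi
      by_cases h2 : i.val % n = n - (k.val + 1)
      · rw [(hd i hi).1 h2, (hd' i hi).1 h2]
      · rw [(hd i hi).2 (by omega), (hd' i hi).2 (by omega)]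
  · rw [if_neg hi, if_neg hi] at hyi; exact hyi

lemma T_mulVec (n : ℕ) (α : Fin 3) (v : QubitIdx (3 * n) → ℂ) (x : QubitIdx (3 * n)) :
    ((∑ k : Fin n, tensorFamily (fun i =>
        if i.val / n = α.val then cellFactor n (k.val + 1) sigma01 sigma10 (i.val % n)
        else 1)) *ᵥ v) x =
      ∑ k : Fin n, (if domP n α (k.val + 1) x then v (ysucc n α (k.val + 1) x) else 0) := by
  simp only [Matrix.mulVec, dotProduct, Matrix.sum_apply, Finset.sum_mul]
  rw [Finset.sum_comm]
  refine Finset.sum_congr rfl fun k _ => ?_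
  have hentry : ∀ y, tensorFamily (fun i =>
      if i.val / n = α.val then cellFactor n (k.val + 1) sigma01 sigma10 (i.val % n)
      else 1) x y = if domP n α (k.val + 1) x ∧ y = ysucc n α (k.val + 1) x then 1 else 0 := by
    intro y
    rw [tensor01_apply]
    congr 1
    simp only [eq_iff_iff]
    exact blockCond_iff n α (k.val + 1) x y
  simp only [hentry]
  by_cases hd : domP n α (k.val + 1) x
  · simp only [hd, true_and, if_pos hd]
    rw [Finset.sum_eq_single (ysucc n α (k.val + 1) x)]
    · simp
    · intro y _ hy; simp [hy]
    · simp
  · simp [hd]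

lemma T_norm_le (n : ℕ) (hn : 1 ≤ n) (α : Fin 3) :
    ‖∑ k : Fin n, tensorFamily (N := 3 * n) (fun i =>
        if i.val / n = α.val then cellFactor n (k.val + 1) sigma01 sigma10 (i.val % n)
        else 1)‖ ≤ 1 := by
  set T := ∑ k : Fin n, tensorFamily (N := 3 * n) (fun i =>
      if i.val / n = α.val then cellFactor n (k.val + 1) sigma01 sigma10 (i.val % n)
      else 1) with hT
  refine l2_opNorm_le_of_mulVec _ _ zero_le_one fun v => ?_
  refine euc_norm_le_of_sq _ _ (by positivity) ?_
  set t : QubitIdx (3 * n) → Fin n → ℂ := fun x k =>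
    if domP n α (k.val + 1) x then v (ysucc n α (k.val + 1) x) else 0 with ht
  have hTv : ∀ x, ((EuclideanSpace.equiv (QubitIdx (3 * n)) ℂ).symm (T *ᵥ v)) x
      = ∑ k : Fin n, t x k := fun x => T_mulVec n α v x
  have hsq : ∀ x, ‖∑ k : Fin n, t x k‖ ^ 2 = ∑ k : Fin n, ‖t x k‖ ^ 2 := by
    intro x
    by_cases hx : ∃ k : Fin n, domP n α (k.val + 1) x
    · obtain ⟨k₀, hk₀⟩ := hx
      have huniq : ∀ k : Fin n, k ≠ k₀ → t x k = 0 := by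
        intro k hk
        rw [ht]
        simp only
        rw [if_neg]
        intro hd
        exact hk (domP_unique n hn α k k₀ x hd hk₀)
      rw [Finset.sum_eq_single k₀ (fun k _ hk => huniq k hk) (by simp),
        Finset.sum_eq_single k₀ (fun k _ hk => by rw [huniq k hk]; simp) (by simp)]
    · push_neg at hx
      have : ∀ k : Fin n, t x k = 0 := fun k => if_neg (hx k)
      simp [this]
  calc ∑ x, ‖((EuclideanSpace.equiv (QubitIdx (3 * n)) ℂ).symm (T *ᵥ v)) x‖ ^ 2
      = ∑ x, ∑ k : Fin n, ‖t x k‖ ^ 2 := by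
        refine Finset.sum_congr rfl fun x _ => ?_
        rw [hTv x, hsq x]
    _ = ∑ p ∈ Finset.univ.filter (fun p : QubitIdx (3 * n) × Fin n =>
          domP n α (p.2.val + 1) p.1), ‖v (ysucc n α (p.2.val + 1) p.1)‖ ^ 2 := by
        rw [Finset.sum_filter, Fintype.sum_prod_type]
        refine Finset.sum_congr rfl fun x _ => Finset.sum_congr rfl fun k _ => ?_
        rw [ht]
        simp only
        split_ifs <;> simp
    _ = ∑ y ∈ (Finset.univ.filter (fun p : QubitIdx (3 * n) × Fin n =>
          domP n α (p.2.val + 1) p.1)).image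
          (fun p => ysucc n α (p.2.val + 1) p.1), ‖v y‖ ^ 2 := by
        rw [Finset.sum_image]
        intro p hp q hq hpq
        simp only [Finset.coe_filter, Set.mem_setOf_eq, Finset.mem_filter] at hp hq
        obtain ⟨hx, hk⟩ := ysucc_inj n hn α p.2 q.2 p.1 q.1 hp.2 hq.2 hpq
        exact Prod.ext hx hk
    _ ≤ ∑ y : QubitIdx (3 * n), ‖v y‖ ^ 2 := by
        refine Finset.sum_le_sum_of_subset_of_nonneg (Finset.subset_univ _) ?_
        intro y _ _
        positivity
    _ ≤ (1 * ‖v‖) ^ 2 := by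
        rw [one_mul, euc_norm_sq]

-- ### Conjugate transpose structure and the `D` bound

lemma tensorFamily_conjT {N : ℕ} (f : Fin N → Matrix (Fin 2) (Fin 2) ℂ) :
    (tensorFamily f)ᴴ = tensorFamily (fun i => (f i)ᴴ) := by
  ext x y
  simp [tensorFamily, Matrix.conjTranspose_apply, star_prod]

lemma factor_conjT (n : ℕ) (α : Fin 3) (k : ℕ) (i : Fin (3 * n)) :
    (if i.val / n = α.val then cellFactor n k sigma01 sigma10 (i.val % n) else 1)ᴴ =
      if i.val / n = α.val then cellFactor n k sigma10 sigma01 (i.val % n) else 1 := by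
  split_ifs with h
  · unfold cellFactor
    split_ifs <;>
      simp [sigma01_conjT, ← sigma01_conjT]
  · exact Matrix.conjTranspose_one

lemma sum_Smat (n : ℕ) (α : Fin 3) :
    ∑ k : Fin n, Smat n α (k.val + 1) =
      (∑ k : Fin n, tensorFamily (N := 3 * n) (fun i =>
        if i.val / n = α.val then cellFactor n (k.val + 1) sigma01 sigma10 (i.val % n)
        else 1)) -
      (∑ k : Fin n, tensorFamily (N := 3 * n) (fun i =>
        if i.val / n = α.val then cellFactor n (k.val + 1) sigma01 sigma10 (i.val % n)
        else 1))ᴴ := by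
  rw [Matrix.conjTranspose_sum, ← Finset.sum_sub_distrib]
  refine Finset.sum_congr rfl fun k _ => ?_
  unfold Smat
  congr 1
  rw [tensorFamily_conjT]
  exact congrArg tensorFamily (funext fun i => (factor_conjT n α (k.val + 1) i).symm)

lemma Dmat_norm_le (n : ℕ) (hn : 1 ≤ n) (h : ℝ) (hh : 0 < h) (α : Fin 3) :
    ‖Dmat n h α‖ ≤ 1 / h := by
  unfold Dmat
  rw [norm_smul]
  have hc : ‖(1 / (2 * (h : ℂ)))‖ = 1 / (2 * h) := by
    have : (1 / (2 * (h : ℂ))) = ((1 / (2 * h) : ℝ) : ℂ) := by push_cast; ring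
    rw [this, Complex.norm_real, Real.norm_eq_abs, abs_of_pos (by positivity)]
  rw [hc, sum_Smat n α]
  set T := ∑ k : Fin n, tensorFamily (N := 3 * n) (fun i =>
      if i.val / n = α.val then cellFactor n (k.val + 1) sigma01 sigma10 (i.val % n)
      else 1) with hT
  have h1 : ‖T - Tᴴ‖ ≤ 2 := by
    calc ‖T - Tᴴ‖ ≤ ‖T‖ + ‖Tᴴ‖ := norm_sub_le _ _
      _ = ‖T‖ + ‖T‖ := by rw [Matrix.l2_opNorm_conjTranspose]
      _ ≤ 2 := by have := T_norm_le n hn α; rw [← hT] at this; linarith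
  calc 1 / (2 * h) * ‖T - Tᴴ‖ ≤ 1 / (2 * h) * 2 := by
        have : (0:ℝ) ≤ 1 / (2 * h) := by positivity
        nlinarith
    _ = 1 / h := by field_simp
  
end Aux

/-- **Operator-norm bound on the semidiscrete elastic operator**
`L_h = ∑_α (ρ^(−1/2) C^(α) S_comp^(−1/2)) ⊗ D^(α)`:
`‖L_h‖ ≤ (3/h) ρ^(−1/2) ‖S_comp^(−1/2)‖`. -/
theorem elastic_Lh_norm_bound
    (ρ : ℝ) (hρ : 0 < ρ) (S : Matrix (Fin 6) (Fin 6) ℂ) (hS : S.PosDef)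
    (n : ℕ) (hn : 1 ≤ n) (h : ℝ) (hh : 0 < h) :
    ‖∑ α : Fin 3, (((ρ ^ (-(1 / 2) : ℝ) : ℝ) : ℂ) • (Cmat α * invSqrt hS)) ⊗ₖ
        Dmat n h α‖ ≤
      3 / h * (ρ ^ (-(1 / 2) : ℝ) * ‖invSqrt hS‖) := by
  set W := invSqrt hS with hW
  set r : ℝ := ρ ^ (-(1 / 2) : ℝ) with hrdef
  have hr : 0 < r := Real.rpow_pos_of_pos hρ _
  have hbound : ∀ α : Fin 3,
      ‖(((r : ℝ) : ℂ) • (Cmat α * W)) ⊗ₖ Dmat n h α‖ ≤ r * ‖W‖ * (1 / h) := by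
    intro α
    have h1 : ‖(((r : ℝ) : ℂ) • (Cmat α * W)) ⊗ₖ Dmat n h α‖ ≤
        ‖((r : ℝ) : ℂ) • (Cmat α * W)‖ * ‖Dmat n h α‖ := kron_norm_le _ _
    have h2 : ‖((r : ℝ) : ℂ) • (Cmat α * W)‖ ≤ r * ‖W‖ := by
      rw [norm_smul, Complex.norm_real, Real.norm_eq_abs, abs_of_pos hr]
      have h3 : ‖Cmat α * W‖ ≤ ‖Cmat α‖ * ‖W‖ := Matrix.l2_opNorm_mul _ _
      rw [Cmat_norm, one_mul] at h3
      nlinarith [norm_nonneg W]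
    have h4 : ‖Dmat n h α‖ ≤ 1 / h := Dmat_norm_le n hn h hh α
    calc ‖(((r : ℝ) : ℂ) • (Cmat α * W)) ⊗ₖ Dmat n h α‖
        ≤ ‖((r : ℝ) : ℂ) • (Cmat α * W)‖ * ‖Dmat n h α‖ := h1
      _ ≤ r * ‖W‖ * (1 / h) := by
          have hn1 := norm_nonneg (((r : ℝ) : ℂ) • (Cmat α * W))
          have hn2 := norm_nonneg (Dmat n h α)
          have : (0:ℝ) ≤ r * ‖W‖ := by positivity
          nlinarith
  calc ‖∑ α : Fin 3, (((r : ℝ) : ℂ) • (Cmat α * W)) ⊗ₖ Dmat n h α‖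
      ≤ ∑ α : Fin 3, ‖(((r : ℝ) : ℂ) • (Cmat α * W)) ⊗ₖ Dmat n h α‖ :=
        norm_sum_le _ _
    _ ≤ ∑ _α : Fin 3, r * ‖W‖ * (1 / h) := Finset.sum_le_sum fun α _ => hbound α
    _ = 3 * (r * ‖W‖ * (1 / h)) := by
        rw [Finset.sum_const, Finset.card_univ, Fintype.card_fin]
        simp
    _ = 3 / h * (r * ‖W‖) := by field_simp
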